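/- Let R be a Hopf algebra over a commutative ring k whose antipode ι is an involution, let D be a right R-module, and let A be a left R-module. Then there is a natural isomorphism of k-modules D ⊗_R A ≅ k ⊗_R (D ⊗_k A), where k is a right R-module via the counit and D ⊗_k A is the left R-module described in the context. -/

import Mathlib

open TensorProduct

section HopfSetup

variable (k : Type) [CommRing k] (R : Type) [Ring R] [HopfAlgebra k R]
variable (D : Type) [AddCommGroup D] [Module k D] [Module Rᵐᵒᵖ D] [IsScalarTower k Rᵐᵒᵖ D]
variable (A : Type) [AddCommGroup A] [Module k A] [Module R A] [IsScalarTower k R A]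

/-- The right action of `x : R` on a right `R`-module `D`, as a `k`-linear map. -/
def rightSmul (x : R) : D →ₗ[k] D where
  toFun d := MulOpposite.op x • d
  map_add' := smul_add _
  map_smul' c d := smul_comm _ c d

/-- The left action of `x : R` on a left `R`-module `A`, as a `k`-linear map. -/
def leftSmul (x : R) : A →ₗ[k] A where
  toFun a := x • a
  map_add' := smul_add _
  map_smul' c a := smul_comm _ c a

lemma rightSmul_add (x y : R) :
    rightSmul k R D (x + y) = rightSmul k R D x + rightSmul k R D y := by
  ext d
  simp [rightSmul, add_smul]

lemma rightSmul_ksmul (c : k) (x : R) :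
    rightSmul k R D (c • x) = c • rightSmul k R D x := by
  ext d
  simp only [rightSmul, LinearMap.coe_mk, AddHom.coe_mk, LinearMap.smul_apply]
  rw [MulOpposite.op_smul, smul_assoc]

lemma leftSmul_add (x y : R) :
    leftSmul k R A (x + y) = leftSmul k R A x + leftSmul k R A y := by
  ext a
  simp [leftSmul, add_smul]

lemma leftSmul_ksmul (c : k) (x : R) :
    leftSmul k R A (c • x) = c • leftSmul k R A x := by
  ext a
  simp only [leftSmul, LinearMap.coe_mk, AddHom.coe_mk, LinearMap.smul_apply]
  rw [smul_assoc]

/-- The bilinear map `R × R → End_k(D ⊗_k A)` sending `(r₁, r₂)` to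
`d ⊗ a ↦ (d · ι(r₁)) ⊗ (r₂ · a)`, where `ι` is the antipode. -/
noncomputable def sweedlerBilinear :
    R →ₗ[k] R →ₗ[k] ((D ⊗[k] A) →ₗ[k] (D ⊗[k] A)) :=
  LinearMap.mk₂ k
    (fun r₁ r₂ => TensorProduct.map
      (rightSmul k R D (HopfAlgebra.antipode (R := k) (A := R) r₁)) (leftSmul k R A r₂))
    (fun r r' s => by
      rw [map_add, rightSmul_add, TensorProduct.map_add_left])
    (fun c r s => by
      rw [map_smul, rightSmul_ksmul, TensorProduct.map_smul_left])
    (fun r s s' => by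
      rw [leftSmul_add, TensorProduct.map_add_right])
    (fun c r s => by
      rw [leftSmul_ksmul, TensorProduct.map_smul_right])

/-- The operator on `D ⊗_k A` induced by `r ∈ R` via the Sweedler-notation formula
`r · (d ⊗ a) = ∑ (d · ι(r₍₁₎)) ⊗ (r₍₂₎ · a)`. -/
noncomputable def sweedlerAction : R →ₗ[k] ((D ⊗[k] A) →ₗ[k] (D ⊗[k] A)) :=
  (TensorProduct.lift (sweedlerBilinear k R D A)).comp
    (Coalgebra.comul (R := k) (A := R))

end HopfSetup

section Aux2

open Coalgebra

variable (k : Type) [CommRing k] (R : Type) [Ring R] [HopfAlgebra k R]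
variable (D : Type) [AddCommGroup D] [Module k D] [Module Rᵐᵒᵖ D] [IsScalarTower k Rᵐᵒᵖ D]
variable (A : Type) [AddCommGroup A] [Module k A] [Module R A] [IsScalarTower k R A]

/-- `w ↦ (op w) • d` as a `k`-linear map. -/
def actD (d : D) : R →ₗ[k] D where
  toFun w := MulOpposite.op w • d
  map_add' x y := by simp [add_smul]
  map_smul' c x := by simp [MulOpposite.op_smul, smul_assoc]

/-- `z ↦ z • a` as a `k`-linear map. -/
def actA (a : A) : R →ₗ[k] A where
  toFun z := z • a
  map_add' x y := add_smul x y a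
  map_smul' c z := smul_assoc c z a

lemma op_algebraMap_smul (c : k) (d : D) :
    MulOpposite.op (algebraMap k R c) • d = c • d := by
  rw [Algebra.algebraMap_eq_smul_one, MulOpposite.op_smul, smul_assoc, MulOpposite.op_one,
    one_smul]

lemma sweedlerAction_tmul (r : R) (d : D) (a : A) (ρ : Coalgebra.Repr k r (R × R)) :
    sweedlerAction k R D A r (d ⊗ₜ[k] a) =
      ∑ i ∈ ρ.index,
        (MulOpposite.op (HopfAlgebra.antipode (R := k) (A := R) (ρ.left i)) • d) ⊗ₜ[k]
          (ρ.right i • a) := by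
  rw [sweedlerAction, LinearMap.comp_apply, ← ρ.eq, map_sum, LinearMap.sum_apply]
  simp [sweedlerBilinear, rightSmul, leftSmul]

/-- The trilinear map `x ⊗ (u ⊗ v) ↦ (op (x * ι u) • d) ⊗ (v • a)`, curried head. -/
noncomputable def xiAux (d : D) (a : A) : R →ₗ[k] (R ⊗[k] R →ₗ[k] D ⊗[k] A) where
  toFun x := TensorProduct.map
    ((actD k R D d).comp ((LinearMap.mulLeft k x).comp (HopfAlgebra.antipode (R := k) (A := R))))
    (actA k R A a)
  map_add' x y := by
    ext u v
    simp [actD, actA, add_mul, add_smul, TensorProduct.add_tmul]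
  map_smul' c x := by
    ext u v
    simp [actD, actA, MulOpposite.op_smul, smul_assoc, TensorProduct.smul_tmul']

/-- The trilinear map `x ⊗ (u ⊗ v) ↦ (op (x * ι u) • d) ⊗ (v • a)`. -/
noncomputable def xi (d : D) (a : A) : R ⊗[k] (R ⊗[k] R) →ₗ[k] D ⊗[k] A :=
  TensorProduct.lift (xiAux k R D A d a)

lemma xi_tmul (d : D) (a : A) (x u v : R) :
    xi k R D A d a (x ⊗ₜ[k] (u ⊗ₜ[k] v)) =
      (MulOpposite.op (x * HopfAlgebra.antipode (R := k) (A := R) u) • d) ⊗ₜ[k] (v • a) := by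
  simp [xi, xiAux, actD, actA]

end Aux2

/-- Let `R` be a Hopf algebra over a commutative ring `k` whose antipode is
an involution, `D` a right `R`-module and `A` a left `R`-module, and endow `D ⊗_k A` with the
left `R`-module structure `r · (d ⊗ a) = ∑ (d · ι(r₍₁₎)) ⊗ (r₍₂₎ · a)`.  Then there is a
natural isomorphism of `k`-modules `D ⊗_R A ≅ k ⊗_R (D ⊗_k A)`, where `k` is a right
`R`-module via the counit; here `D ⊗_R A` is realized as the quotient of `D ⊗_k A` by the
relations `(d · r) ⊗ a = d ⊗ (r · a)` and `k ⊗_R (D ⊗_k A)` as the quotient of `D ⊗_k A`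
by the relations `r · y = ε(r) · y`. -/
theorem stmt2 (k : Type) [CommRing k] (R : Type) [Ring R] [HopfAlgebra k R]
    (hinv : ∀ x : R, HopfAlgebra.antipode (R := k) (A := R)
        (HopfAlgebra.antipode (R := k) (A := R) x) = x)
    (D : Type) [AddCommGroup D] [Module k D] [Module Rᵐᵒᵖ D] [IsScalarTower k Rᵐᵒᵖ D]
    (A : Type) [AddCommGroup A] [Module k A] [Module R A] [IsScalarTower k R A]
    [Module R (D ⊗[k] A)]
    (hsmul : ∀ (r : R) (x : D ⊗[k] A), r • x = sweedlerAction k R D A r x) :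
    Nonempty (
      ((D ⊗[k] A) ⧸ Submodule.span k {x : D ⊗[k] A |
          ∃ (r : R) (d : D) (a : A), x = (MulOpposite.op r • d) ⊗ₜ[k] a - d ⊗ₜ[k] (r • a)})
      ≃ₗ[k]
      ((D ⊗[k] A) ⧸ Submodule.span k {x : D ⊗[k] A |
          ∃ (r : R) (y : D ⊗[k] A), x = r • y - Coalgebra.counit (R := k) (A := R) r • y})) := by
  classical
  refine ⟨Submodule.quotEquivOfEq _ _ ?_⟩
  apply le_antisymm
  · -- S1 ⊆ S2
    rw [Submodule.span_le]
    rintro x ⟨r, d, a, rfl⟩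
    set ρ := Coalgebra.Repr.arbitrary k r with hρ
    have hmem : ∑ i ∈ ρ.index,
        (ρ.right i • ((MulOpposite.op (ρ.left i) • d) ⊗ₜ[k] a) -
          Coalgebra.counit (R := k) (A := R) (ρ.right i) •
            ((MulOpposite.op (ρ.left i) • d) ⊗ₜ[k] a)) ∈
        Submodule.span k {x : D ⊗[k] A |
          ∃ (r : R) (y : D ⊗[k] A), x = r • y - Coalgebra.counit (R := k) (A := R) r • y} :=
      Submodule.sum_mem _ fun i _ => Submodule.subset_span ⟨ρ.right i, _, rfl⟩
    have hr2 : ∑ i ∈ ρ.index, Coalgebra.counit (R := k) (A := R) (ρ.right i) • ρ.left i = r := by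
      have h := congrArg (TensorProduct.rid k R) (Coalgebra.sum_tmul_counit_eq (R := k) ρ)
      simp only [map_sum, TensorProduct.rid_tmul, one_smul] at h
      exact h
    have hX : ∑ i ∈ ρ.index, ρ.right i • ((MulOpposite.op (ρ.left i) • d) ⊗ₜ[k] a) =
        d ⊗ₜ[k] (r • a) := by
      have hterm : ∀ i ∈ ρ.index,
          ρ.right i • ((MulOpposite.op (ρ.left i) • d) ⊗ₜ[k] a) =
            xi k R D A d a (ρ.left i ⊗ₜ[k] Coalgebra.comul (R := k) (ρ.right i)) := by
        intro i _
        rw [hsmul, sweedlerAction_tmul k R D A _ _ _ (Coalgebra.Repr.arbitrary k (ρ.right i)),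
          ← (Coalgebra.Repr.arbitrary k (ρ.right i)).eq, TensorProduct.tmul_sum, map_sum]
        refine Finset.sum_congr rfl fun j _ => ?_
        rw [xi_tmul, smul_smul, ← MulOpposite.op_mul]
      calc ∑ i ∈ ρ.index, ρ.right i • ((MulOpposite.op (ρ.left i) • d) ⊗ₜ[k] a)
          = xi k R D A d a (∑ i ∈ ρ.index,
              ρ.left i ⊗ₜ[k] Coalgebra.comul (R := k) (ρ.right i)) := by
            rw [map_sum]; exact Finset.sum_congr rfl hterm
        _ = xi k R D A d a
              ((Coalgebra.comul (R := k) (A := R)).lTensor R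
                (Coalgebra.comul (R := k) r)) := by
            rw [← ρ.eq]
            simp only [map_sum, LinearMap.lTensor_tmul]
        _ = xi k R D A d a
              ((TensorProduct.assoc k R R R)
                ((Coalgebra.comul (R := k) (A := R)).rTensor R
                  (Coalgebra.comul (R := k) r))) := by
            rw [Coalgebra.coassoc_apply]
        _ = d ⊗ₜ[k] (r • a) := ?_
      rw [← ρ.eq, map_sum, map_sum, map_sum]
      have hterm2 : ∀ i ∈ ρ.index,
          xi k R D A d a ((TensorProduct.assoc k R R R)
            ((Coalgebra.comul (R := k) (A := R)).rTensor R (ρ.left i ⊗ₜ[k] ρ.right i))) =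
          d ⊗ₜ[k] (Coalgebra.counit (R := k) (A := R) (ρ.left i) • ρ.right i • a) := by
        intro i _
        set σ := Coalgebra.Repr.arbitrary k (ρ.left i) with hσ
        rw [LinearMap.rTensor_tmul, ← σ.eq, TensorProduct.sum_tmul, map_sum, map_sum]
        have : ∀ j ∈ σ.index,
            xi k R D A d a ((TensorProduct.assoc k R R R)
              ((σ.left j ⊗ₜ[k] σ.right j) ⊗ₜ[k] ρ.right i)) =
            (MulOpposite.op (σ.left j *
              HopfAlgebra.antipode (R := k) (A := R) (σ.right j)) • d) ⊗ₜ[k] (ρ.right i • a) := by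
          intro j _
          rw [TensorProduct.assoc_tmul, xi_tmul]
        rw [Finset.sum_congr rfl this, ← TensorProduct.sum_tmul, ← Finset.sum_smul]
        have hop : ∑ j ∈ σ.index, MulOpposite.op (σ.left j *
            HopfAlgebra.antipode (R := k) (A := R) (σ.right j)) =
            MulOpposite.op (algebraMap k R (Coalgebra.counit (R := k) (A := R) (ρ.left i))) := by
          rw [← HopfAlgebra.sum_mul_antipode_eq_algebraMap_counit σ]
          exact (map_sum (MulOpposite.opAddEquiv (α := R)) _ _).symm
        rw [hop, op_algebraMap_smul, TensorProduct.smul_tmul]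
      rw [Finset.sum_congr rfl hterm2, ← TensorProduct.tmul_sum]
      congr 1
      calc ∑ i ∈ ρ.index, Coalgebra.counit (R := k) (A := R) (ρ.left i) • ρ.right i • a
          = (∑ i ∈ ρ.index, Coalgebra.counit (R := k) (A := R) (ρ.left i) • ρ.right i) • a := by
            rw [Finset.sum_smul]
            exact Finset.sum_congr rfl fun i _ => (smul_assoc _ _ _).symm
        _ = r • a := by
            congr 1
            have h := congrArg (TensorProduct.lid k R) (Coalgebra.sum_counit_tmul_eq (R := k) ρ)
            simp only [map_sum, TensorProduct.lid_tmul, one_smul] at h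
            exact h
    have hY : ∑ i ∈ ρ.index, Coalgebra.counit (R := k) (A := R) (ρ.right i) •
        ((MulOpposite.op (ρ.left i) • d) ⊗ₜ[k] a) = (MulOpposite.op r • d) ⊗ₜ[k] a := by
      have hψ : ∀ z : R,
          (((TensorProduct.mk k D A).flip a).comp (actD k R D d)) z =
            (MulOpposite.op z • d) ⊗ₜ[k] a := fun z => rfl
      calc ∑ i ∈ ρ.index, Coalgebra.counit (R := k) (A := R) (ρ.right i) •
            ((MulOpposite.op (ρ.left i) • d) ⊗ₜ[k] a)
          = (((TensorProduct.mk k D A).flip a).comp (actD k R D d))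
              (∑ i ∈ ρ.index, Coalgebra.counit (R := k) (A := R) (ρ.right i) • ρ.left i) := by
            rw [map_sum]
            exact Finset.sum_congr rfl fun i _ => by rw [map_smul, hψ]
        _ = (MulOpposite.op r • d) ⊗ₜ[k] a := by rw [hr2]; exact hψ r
    have heq : (MulOpposite.op r • d) ⊗ₜ[k] a - d ⊗ₜ[k] (r • a) =
        -(∑ i ∈ ρ.index,
          (ρ.right i • ((MulOpposite.op (ρ.left i) • d) ⊗ₜ[k] a) -
            Coalgebra.counit (R := k) (A := R) (ρ.right i) •
              ((MulOpposite.op (ρ.left i) • d) ⊗ₜ[k] a))) := by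
      rw [Finset.sum_sub_distrib, hX, hY]
      abel
    rw [heq]
    exact neg_mem hmem
  · -- S2 ⊆ S1
    rw [Submodule.span_le]
    rintro x ⟨r, y, rfl⟩
    induction y using TensorProduct.induction_on with
    | zero =>
        simp only [smul_zero, sub_zero]
        exact Submodule.zero_mem _
    | add y z hy hz =>
        have : r • (y + z) - Coalgebra.counit (R := k) (A := R) r • (y + z) =
            (r • y - Coalgebra.counit (R := k) (A := R) r • y) +
            (r • z - Coalgebra.counit (R := k) (A := R) r • z) := by
          rw [smul_add, smul_add]; abel
        rw [this]
        exact add_mem hy hz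
    | tmul d a =>
        set ρ := Coalgebra.Repr.arbitrary k r with hρ
        have h1 : r • (d ⊗ₜ[k] a) = ∑ i ∈ ρ.index,
            (MulOpposite.op (HopfAlgebra.antipode (R := k) (A := R) (ρ.left i)) • d) ⊗ₜ[k]
              (ρ.right i • a) := by
          rw [hsmul, sweedlerAction_tmul k R D A r d a ρ]
        have h2 : Coalgebra.counit (R := k) (A := R) r • (d ⊗ₜ[k] a) = ∑ i ∈ ρ.index,
            d ⊗ₜ[k] (HopfAlgebra.antipode (R := k) (A := R) (ρ.left i) • ρ.right i • a) := by
          have hs : ∑ i ∈ ρ.index,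
              d ⊗ₜ[k] (HopfAlgebra.antipode (R := k) (A := R) (ρ.left i) • ρ.right i • a) =
              d ⊗ₜ[k] ((∑ i ∈ ρ.index,
                HopfAlgebra.antipode (R := k) (A := R) (ρ.left i) * ρ.right i) • a) := by
            rw [← TensorProduct.tmul_sum]
            congr 1
            rw [Finset.sum_smul]
            exact Finset.sum_congr rfl fun i _ => (mul_smul _ _ _).symm
          rw [hs, HopfAlgebra.sum_antipode_mul_eq_algebraMap_counit ρ, algebraMap_smul, tmul_smul]
        have heq : r • (d ⊗ₜ[k] a) - Coalgebra.counit (R := k) (A := R) r • (d ⊗ₜ[k] a) =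
            ∑ i ∈ ρ.index,
              ((MulOpposite.op (HopfAlgebra.antipode (R := k) (A := R) (ρ.left i)) • d) ⊗ₜ[k]
                  (ρ.right i • a) -
                d ⊗ₜ[k] (HopfAlgebra.antipode (R := k) (A := R) (ρ.left i) • ρ.right i • a)) := by
          rw [Finset.sum_sub_distrib, ← h1, ← h2]
        rw [heq]
        exact Submodule.sum_mem _ fun i _ => Submodule.subset_span
          ⟨HopfAlgebra.antipode (R := k) (A := R) (ρ.left i), d, ρ.right i • a, rfl⟩
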